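/- Let G be a finite oriented multigraph and A a finite abelian group, and let b : V(G) → A be a locally zero-sum function (the restriction of b to each connected component sums to 0). Then the number of (A,b)-flows of G (functions f : E(G) → A with ∂f = b) equals |A|^{m(G)}, where m(G) = |E(G)| − |V(G)| + c(G) and c(G) is the number of connected components. -/

import Mathlib

open Finset

attribute [local instance] Classical.propDecidable

universe u v w

/-- Adjacency through a present edge in the spanning subgraph with edge predicate `ok`. -/
def edgeRel {V E : Type*} (head tail : E → V) (ok : E → Prop) (u v : V) : Prop :=
  ∃ e, ok e ∧ ((head e = u ∧ tail e = v) ∨ (head e = v ∧ tail e = u))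

/-- Reachability (same connected component) in the spanning subgraph. -/
def Reach {V E : Type*} (head tail : E → V) (ok : E → Prop) : V → V → Prop :=
  Relation.EqvGen (edgeRel head tail ok)

/-- Number of connected components of the spanning subgraph. -/
noncomputable def ncomp {V E : Type*} (head tail : E → V) (ok : E → Prop) : ℕ :=
  Nat.card (Quotient (Relation.EqvGen.setoid (edgeRel head tail ok)))

/-- Boundary of an edge-valued function, via the orientation `head`/`tail`. -/
noncomputable def bdry {V E A : Type*} [Fintype E] [AddCommGroup A]
    (head tail : E → V) (f : E → A) (v : V) : A :=
  ∑ e : E, ((if head e = v then f e else 0) - (if tail e = v then f e else 0))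

/-- Boundary of an edge-valued function on the spanning subgraph with edges `ok`. -/
noncomputable def bdrySub {V E A : Type*} [Fintype E] [AddCommGroup A]
    (head tail : E → V) (ok : E → Prop) (f : {e : E // ok e} → A) (v : V) : A :=
  ∑ e : {e : E // ok e}, ((if head e.1 = v then f e else 0) - (if tail e.1 = v then f e else 0))

/-- `b` sums to zero over every connected component of the spanning subgraph
(`b`-compatibility / locally zero-sum). -/
def Compatible {V E A : Type*} [Fintype V] [AddCommGroup A]
    (head tail : E → V) (ok : E → Prop) (b : V → A) : Prop :=
  ∀ v : V, (∑ u : V, if Reach head tail ok u v then b u else 0) = 0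

/-- A bond: a minimal nonempty edge set whose deletion changes the number of components,
equivalently a minimal nonempty edge cut. -/
def IsBond {V E : Type*} (head tail : E → V) (F : Finset E) : Prop :=
  F.Nonempty ∧ ncomp head tail (fun e => e ∉ F) ≠ ncomp head tail (fun _ => True) ∧
    ∀ F' : Finset E, F' ⊂ F → ncomp head tail (fun e => e ∉ F') = ncomp head tail (fun _ => True)

/-- Cycle rank `m(G-S) = |E(G-S)| - |V| + c(G-S)` of the spanning subgraph `G-S`. -/
noncomputable def cycRank {V E : Type*} [Fintype V] [Fintype E]
    (head tail : E → V) (S : Finset E) : ℕ :=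
  (Fintype.card E - S.card) + ncomp head tail (fun e => e ∉ S) - Fintype.card V

/-- A `b`-compatible bond. -/
def IsCBond {V E A : Type*} [Fintype V] [AddCommGroup A]
    (head tail : E → V) (b : V → A) (F : Finset E) : Prop :=
  IsBond head tail F ∧ Compatible head tail (fun e => e ∉ F) b

/-- A `b`-compatible broken bond w.r.t. the total order `lo` on edges. -/
def IsCBrokenBond {V E A : Type*} [Fintype V] [AddCommGroup A]
    (head tail : E → V) (lo : LinearOrder E) (b : V → A) (B : Finset E) : Prop :=
  ∃ F : Finset E, IsCBond head tail b F ∧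
    ∃ hne : F.Nonempty, B = F.erase (@Finset.max' E lo F hne)

/-- The signless coefficient `a_i(G,b)`: the number of `i`-edge subsets `S` with `G-S`
`b`-compatible and `S` containing no `b`-compatible broken bond. -/
noncomputable def aCoeff {V E A : Type*} [Fintype V] [Fintype E] [AddCommGroup A]
    (head tail : E → V) (lo : LinearOrder E) (b : V → A) (i : ℕ) : ℕ :=
  Nat.card {S : Finset E // S.card = i ∧ Compatible head tail (fun e => e ∉ S) b ∧
    ∀ B : Finset E, IsCBrokenBond head tail lo b B → ¬ B ⊆ S}

/-- Adjacency inside the induced subgraph on the vertex set `X`. -/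
def edgeRelIn {V E : Type*} (head tail : E → V) (X : Set V) (u v : V) : Prop :=
  ∃ e, head e ∈ X ∧ tail e ∈ X ∧ ((head e = u ∧ tail e = v) ∨ (head e = v ∧ tail e = u))

/-- Reachability within the induced subgraph on `X`. -/
def ReachIn {V E : Type*} (head tail : E → V) (X : Set V) : V → V → Prop :=
  Relation.EqvGen (edgeRelIn head tail X)

def setoidOn {V E : Type*} (head tail : E → V) (X : Set V) : Setoid {v : V // v ∈ X} :=
  ⟨fun a b => ReachIn head tail X a.1 b.1,
   ⟨fun a => Relation.EqvGen.refl a.1, fun h => Relation.EqvGen.symm _ _ h, fun h h' => Relation.EqvGen.trans _ _ _ h h'⟩⟩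

/-- Number of connected components of the induced subgraph on `X`. -/
noncomputable def ncompOn {V E : Type*} (head tail : E → V) (X : Set V) : ℕ :=
  Nat.card (Quotient (setoidOn head tail X))

/-- `X ∈ Λ(G)`: `X` nonempty, `G[X]` connected and `c(G-X) = c(G)`. -/
def InLambda {V E : Type*} [Fintype V] (head tail : E → V) (X : Finset V) : Prop :=
  X.Nonempty ∧ (∀ u ∈ X, ∀ v ∈ X, ReachIn head tail (↑X) u v) ∧
    ncompOn head tail ((↑X : Set V)ᶜ) = ncomp head tail (fun _ => True)

section Aux

variable {V E A : Type*} [Fintype V] [Fintype E] [AddCommGroup A]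

lemma reach_equiv {head tail : E → V} {ok : E → Prop} :
    Equivalence (Relation.EqvGen (edgeRel head tail ok)) :=
  Relation.EqvGen.is_equivalence _

/-- boundary over edges in P -/
noncomputable def bdryP (head tail : E → V) (P : Finset E) (f : E → A) (v : V) : A :=
  ∑ e ∈ P, ((if head e = v then f e else 0) - (if tail e = v then f e else 0))

def RP (head tail : E → V) (P : Finset E) : V → V → Prop :=
  Relation.EqvGen (edgeRel head tail (· ∈ P))

def compatP (head tail : E → V) (P : Finset E) (b : V → A) : Prop :=
  ∀ v : V, (∑ u : V, if RP head tail P u v then b u else 0) = 0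

lemma rp_empty (head tail : E → V) (u v : V) :
    RP head tail (∅ : Finset E) u v ↔ u = v := by
  constructor
  · intro h
    induction h with
    | rel a b hab => rcases hab with ⟨e, he, _⟩; simp at he
    | refl a => rfl
    | symm a b _ ih => exact ih.symm
    | trans a b c _ _ ih1 ih2 => exact ih1.trans ih2
  · rintro rfl; exact Relation.EqvGen.refl u

lemma rp_mono {head tail : E → V} {P Q : Finset E} (hPQ : P ⊆ Q) {u v : V}
    (h : RP head tail P u v) : RP head tail Q u v := by
  refine Relation.EqvGen.mono ?_ _ _ h
  rintro a b ⟨e, he, hd⟩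
  exact ⟨e, hPQ he, hd⟩

lemma rp_insert_of_reach {head tail : E → V} {P : Finset E} {e0 : E}
    (hcon : RP head tail P (head e0) (tail e0)) (u v : V) :
    RP head tail (insert e0 P) u v ↔ RP head tail P u v := by
  constructor
  · intro h
    have : ∀ a b, edgeRel head tail (· ∈ insert e0 P) a b → RP head tail P a b := by
      rintro a b ⟨e, he, hd⟩
      rcases Finset.mem_insert.1 he with rfl | he
      · rcases hd with ⟨rfl, rfl⟩ | ⟨rfl, rfl⟩
        · exact hcon
        · exact reach_equiv.symm hcon
      · exact Relation.EqvGen.rel _ _ ⟨e, he, hd⟩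
    have h2 := Relation.EqvGen.mono this _ _ h
    exact reach_equiv.eqvGen_iff.mp h2
  · exact rp_mono (Finset.subset_insert _ _)

lemma rp_insert_iff {head tail : E → V} {P : Finset E} {e0 : E}
    (hnot : ¬ RP head tail P (head e0) (tail e0)) (u v : V) :
    RP head tail (insert e0 P) u v ↔
      RP head tail P u v ∨
      (RP head tail P u (head e0) ∧ RP head tail P (tail e0) v) ∨
      (RP head tail P u (tail e0) ∧ RP head tail P (head e0) v) := by
  set R := RP head tail P with hR
  have hRe : Equivalence R := reach_equiv
  set r : V → V → Prop := fun a b => R a b ∨ (R a (head e0) ∧ R (tail e0) b) ∨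
      (R a (tail e0) ∧ R (head e0) b) with hr
  have hre : Equivalence r := by
    constructor
    · intro a; exact Or.inl (hRe.refl a)
    · rintro a b (h | ⟨h1, h2⟩ | ⟨h1, h2⟩)
      · exact Or.inl (hRe.symm h)
      · exact Or.inr (Or.inr ⟨hRe.symm h2, hRe.symm h1⟩)
      · exact Or.inr (Or.inl ⟨hRe.symm h2, hRe.symm h1⟩)
    · rintro a b c (h | ⟨h1, h2⟩ | ⟨h1, h2⟩) (h' | ⟨h1', h2'⟩ | ⟨h1', h2'⟩)
      · exact Or.inl (hRe.trans h h')
      · exact Or.inr (Or.inl ⟨hRe.trans h h1', h2'⟩)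
      · exact Or.inr (Or.inr ⟨hRe.trans h h1', h2'⟩)
      · exact Or.inr (Or.inl ⟨h1, hRe.trans h2 h'⟩)
      · exact absurd (hRe.symm (hRe.trans h2 h1')) hnot
      · exact Or.inl (hRe.trans h1 h2')
      · exact Or.inr (Or.inr ⟨h1, hRe.trans h2 h'⟩)
      · exact Or.inl (hRe.trans h1 h2')
      · exact absurd (hRe.trans h2 h1') hnot
  constructor
  · intro h
    have : ∀ a b, edgeRel head tail (· ∈ insert e0 P) a b → r a b := by
      rintro a b ⟨e, he, hd⟩
      rcases Finset.mem_insert.1 he with rfl | he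
      · rcases hd with ⟨rfl, rfl⟩ | ⟨rfl, rfl⟩
        · exact Or.inr (Or.inl ⟨hRe.refl _, hRe.refl _⟩)
        · exact Or.inr (Or.inr ⟨hRe.refl _, hRe.refl _⟩)
      · exact Or.inl (Relation.EqvGen.rel _ _ ⟨e, he, hd⟩)
    have h2 := Relation.EqvGen.mono this _ _ h
    rwa [hre.eqvGen_iff] at h2
  · have hmem : RP head tail (insert e0 P) (head e0) (tail e0) :=
      Relation.EqvGen.rel _ _ ⟨e0, Finset.mem_insert_self _ _, Or.inl ⟨rfl, rfl⟩⟩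
    have hsub : ∀ a b, R a b → RP head tail (insert e0 P) a b :=
      fun a b h => rp_mono (Finset.subset_insert _ _) h
    have hEq : Equivalence (RP head tail (insert e0 P)) := reach_equiv
    rintro (h | ⟨h1, h2⟩ | ⟨h1, h2⟩)
    · exact hsub _ _ h
    · exact hEq.trans (hsub _ _ h1) (hEq.trans hmem (hsub _ _ h2))
    · exact hEq.trans (hsub _ _ h1) (hEq.trans (hEq.symm hmem) (hsub _ _ h2))

end Aux

section Aux2
set_option linter.unusedSectionVars false
variable {V E A : Type*} [Fintype V] [Fintype E] [AddCommGroup A]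

attribute [local instance] Classical.propDecidable

lemma exists_flow (head tail : E → V) (P : Finset E) (b : V → A)
    (hb : compatP head tail P b) : ∃ f : E → A, bdryP head tail P f = b := by
  induction P using Finset.induction_on generalizing b with
  | empty =>
    refine ⟨0, funext fun v => ?_⟩
    have h1 : (∑ u : V, if RP head tail (∅ : Finset E) u v then b u else 0) = b v := by
      simp only [rp_empty]
      simp [Finset.sum_ite_eq' Finset.univ v b]
    have := hb v
    rw [h1] at this
    simp [bdryP, this]
  | @insert e0 P he0 ih =>
    have hRe : Equivalence (RP head tail P) := reach_equiv
    by_cases hcon : RP head tail P (head e0) (tail e0)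
    · have hb' : compatP head tail P b := by
        intro v
        have := hb v
        simpa only [rp_insert_of_reach hcon] using this
      obtain ⟨f, hf⟩ := ih b hb'
      refine ⟨Function.update f e0 0, funext fun v => ?_⟩
      have hterm : (∑ e ∈ P, ((if head e = v then Function.update f e0 (0:A) e else 0)
          - (if tail e = v then Function.update f e0 (0:A) e else 0)))
          = bdryP head tail P f v := by
        refine Finset.sum_congr rfl fun e heP => ?_
        have : e ≠ e0 := fun h => he0 (h ▸ heP)
        rw [Function.update_of_ne this]
      rw [bdryP, Finset.sum_insert he0, hterm, hf]
      simp
    · set x : A := ∑ u : V, if RP head tail P u (head e0) then b u else 0 with hx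
      set b' : V → A := fun v => b v - (if head e0 = v then x else 0) + (if tail e0 = v then x else 0)
        with hb'def
      have key : ∀ v, (∑ u : V, if RP head tail P u v then b' u else 0)
          = (∑ u : V, if RP head tail P u v then b u else 0)
            - (if RP head tail P (head e0) v then x else 0)
            + (if RP head tail P (tail e0) v then x else 0) := by
        intro v
        have step1 : (∑ u : V, if RP head tail P u v then b' u else 0)
            = ∑ u : V, ((if RP head tail P u v then b u else 0)
              - (if RP head tail P u v then (if head e0 = u then x else 0) else 0)
              + (if RP head tail P u v then (if tail e0 = u then x else 0) else 0)) := by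
          refine Finset.sum_congr rfl fun u _ => ?_
          by_cases h : RP head tail P u v <;> simp [hb'def, h]
        rw [step1, Finset.sum_add_distrib, Finset.sum_sub_distrib]
        congr 1
        · congr 1
          have : (∑ u : V, if RP head tail P u v then (if head e0 = u then x else 0) else 0)
              = ∑ u : V, (if head e0 = u then (if RP head tail P u v then x else 0) else 0) := by
            refine Finset.sum_congr rfl fun u _ => ?_
            by_cases h1 : RP head tail P u v <;> by_cases h2 : head e0 = u <;> simp [h1, h2]
          rw [this, Finset.sum_ite_eq Finset.univ (head e0)
            (fun u => if RP head tail P u v then x else 0)]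
          simp
        · have : (∑ u : V, if RP head tail P u v then (if tail e0 = u then x else 0) else 0)
              = ∑ u : V, (if tail e0 = u then (if RP head tail P u v then x else 0) else 0) := by
            refine Finset.sum_congr rfl fun u _ => ?_
            by_cases h1 : RP head tail P u v <;> by_cases h2 : tail e0 = u <;> simp [h1, h2]
          rw [this, Finset.sum_ite_eq Finset.univ (tail e0)
            (fun u => if RP head tail P u v then x else 0)]
          simp
      have hb' : compatP head tail P b' := by
        intro v
        rw [key v]
        by_cases hh : RP head tail P (head e0) v
        · have ht : ¬ RP head tail P (tail e0) v := fun ht =>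
            hcon (hRe.trans hh (hRe.symm ht))
          have hTv : (∑ u : V, if RP head tail P u v then b u else 0) = x := by
            rw [hx]
            refine Finset.sum_congr rfl fun u _ => ?_
            have hiff : RP head tail P u v ↔ RP head tail P u (head e0) :=
              ⟨fun h => hRe.trans h (hRe.symm hh), fun h => hRe.trans h hh⟩
            simp only [hiff]
          rw [hTv]
          simp [hh, ht]
        · by_cases ht : RP head tail P (tail e0) v
          · -- merged class: T v + x = 0 from hb v
            have hsplit : (∑ u : V, if RP head tail (insert e0 P) u v then b u else 0)
                = (∑ u : V, if RP head tail P u v then b u else 0)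
                  + ∑ u : V, (if RP head tail P u (head e0) then b u else 0) := by
              rw [← Finset.sum_add_distrib]
              refine Finset.sum_congr rfl fun u _ => ?_
              have hiff := rp_insert_iff hcon u v
              by_cases h1 : RP head tail P u v
              · have h2 : ¬ RP head tail P u (head e0) := fun h2 =>
                  hh (hRe.trans (hRe.symm h2) h1)
                have : RP head tail (insert e0 P) u v := by
                  rw [hiff]; exact Or.inl h1
                simp [this, h1, h2]
              · by_cases h2 : RP head tail P u (head e0)
                · have : RP head tail (insert e0 P) u v := by
                    rw [hiff]; exact Or.inr (Or.inl ⟨h2, ht⟩)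
                  simp [this, h1, h2]
                · have : ¬ RP head tail (insert e0 P) u v := by
                    rw [hiff]
                    rintro (h | ⟨ha, _⟩ | ⟨ha, hb2⟩)
                    · exact h1 h
                    · exact h2 ha
                    · exact hh hb2
                  simp [this, h1, h2]
            have := hb v
            rw [hsplit] at this
            rw [← hx] at this
            simp only [hh, ht, if_false, if_true]
            rw [sub_zero]
            exact this
          · have hsame : (∑ u : V, if RP head tail P u v then b u else 0)
                = (∑ u : V, if RP head tail (insert e0 P) u v then b u else 0) := by
              refine Finset.sum_congr rfl fun u _ => ?_
              have hiff := rp_insert_iff hcon u v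
              have : RP head tail (insert e0 P) u v ↔ RP head tail P u v := by
                rw [hiff]
                constructor
                · rintro (h | ⟨_, h2⟩ | ⟨_, h2⟩)
                  · exact h
                  · exact absurd h2 ht
                  · exact absurd h2 hh
                · exact Or.inl
              simp only [this]
            rw [hsame, hb v]
            simp [hh, ht]
      obtain ⟨f, hf⟩ := ih b' hb'
      refine ⟨Function.update f e0 x, funext fun v => ?_⟩
      have hterm : (∑ e ∈ P, ((if head e = v then Function.update f e0 x e else 0)
          - (if tail e = v then Function.update f e0 x e else 0)))
          = bdryP head tail P f v := by
        refine Finset.sum_congr rfl fun e heP => ?_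
        have : e ≠ e0 := fun h => he0 (h ▸ heP)
        rw [Function.update_of_ne this]
      rw [bdryP, Finset.sum_insert he0, hterm, hf]
      simp only [Function.update_self, hb'def]
      abel
end Aux2

section Aux3
set_option linter.unusedSectionVars false
variable {V E A : Type*} [Fintype V] [Fintype E] [AddCommGroup A]

attribute [local instance] Classical.propDecidable

noncomputable def bdryHomFull (head tail : E → V) : (E → A) →+ (V → A) where
  toFun f := fun v => bdryP head tail Finset.univ f v
  map_zero' := by funext v; simp [bdryP]
  map_add' f g := by
    funext v
    simp only [bdryP, Pi.add_apply, ← Finset.sum_add_distrib]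
    refine Finset.sum_congr rfl fun e _ => ?_
    by_cases h1 : head e = v <;> by_cases h2 : tail e = v <;> simp [h1, h2] <;> abel

noncomputable def sumHom (head tail : E → V) :
    (V → A) →+ (Quotient (Relation.EqvGen.setoid (edgeRel head tail (fun _ : E => True))) → A) where
  toFun b := fun q => ∑ u : V,
    if Quotient.mk (Relation.EqvGen.setoid (edgeRel head tail (fun _ : E => True))) u = q
    then b u else 0
  map_zero' := by funext q; simp
  map_add' f g := by
    funext q
    simp only [Pi.add_apply, ← Finset.sum_add_distrib]
    refine Finset.sum_congr rfl fun u _ => ?_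
    by_cases h : Quotient.mk (Relation.EqvGen.setoid (edgeRel head tail (fun _ : E => True))) u = q
      <;> simp [h]
end Aux3

section Aux4
set_option linter.unusedSectionVars false
variable {V E A : Type*} [Fintype V] [Fintype E] [AddCommGroup A]

attribute [local instance] Classical.propDecidable

noncomputable def mkc (head tail : E → V) (u : V) :
    Quotient (Relation.EqvGen.setoid (edgeRel head tail (fun _ : E => True))) :=
  Quotient.mk _ u

lemma edgeRel_univ (head tail : E → V) :
    edgeRel head tail (fun _ : E => True) = edgeRel head tail (· ∈ (Finset.univ : Finset E)) := by
  funext u v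
  simp [edgeRel]

lemma reach_eq_rp_univ (head tail : E → V) (u v : V) :
    Reach head tail (fun _ : E => True) u v ↔ RP head tail (Finset.univ : Finset E) u v := by
  rw [Reach, RP, edgeRel_univ]

lemma mk_eq_mk_iff (head tail : E → V) (u v : V) :
    mkc head tail u = mkc head tail v ↔ Reach head tail (fun _ : E => True) u v := by
  rw [mkc, mkc, Quotient.eq]
  exact Iff.rfl

lemma bdry_eq (head tail : E → V) (f : E → A) :
    bdry head tail f = bdryHomFull head tail f := rfl

lemma sumHom_apply (head tail : E → V) (b : V → A) (q) :
    sumHom head tail b q = ∑ u : V, if mkc head tail u = q then b u else 0 := rfl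

lemma compatible_iff_sumHom (head tail : E → V) (b : V → A) :
    Compatible head tail (fun _ : E => True) b ↔ sumHom head tail b = 0 := by
  constructor
  · intro hc
    funext q
    induction q using Quotient.ind with
    | _ v =>
      rw [Pi.zero_apply, sumHom_apply]
      have heq : (∑ u : V, if mkc head tail u = mkc head tail v then b u else 0)
          = ∑ u : V, if Reach head tail (fun _ : E => True) u v then b u else 0 :=
        Finset.sum_congr rfl fun u _ => by simp only [mk_eq_mk_iff]
      exact heq.trans (hc v)
  · intro hz v
    have h0 : sumHom head tail b (mkc head tail v) = 0 := by rw [hz]; rfl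
    rw [sumHom_apply] at h0
    have heq : (∑ u : V, if Reach head tail (fun _ : E => True) u v then b u else 0)
        = ∑ u : V, if mkc head tail u = mkc head tail v then b u else 0 :=
      Finset.sum_congr rfl fun u _ => by simp only [mk_eq_mk_iff]
    exact heq.trans h0

lemma sumHom_bdry (head tail : E → V) (f : E → A) :
    sumHom head tail (bdryHomFull head tail f) = 0 := by
  funext q
  rw [Pi.zero_apply, sumHom_apply]
  have hbdry : ∀ u : V, bdryHomFull (A := A) head tail f u
      = ∑ e : E, ((if head e = u then f e else 0) - (if tail e = u then f e else 0)) := fun u => rfl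
  have step1 : (∑ u : V, if mkc head tail u = q then bdryHomFull head tail f u else 0)
      = ∑ u : V, ∑ e : E, (if mkc head tail u = q then
        ((if head e = u then f e else 0) - (if tail e = u then f e else 0)) else 0) := by
    refine Finset.sum_congr rfl fun u _ => ?_
    rw [hbdry u]
    by_cases h : mkc head tail u = q <;> simp [h]
  rw [step1, Finset.sum_comm]
  refine Finset.sum_eq_zero fun e _ => ?_
  have collapse : ∀ (w : V), (∑ u : V, if mkc head tail u = q then (if w = u then f e else 0) else 0)
      = (if mkc head tail w = q then f e else 0) := by
    intro w
    have h1 : (∑ u : V, if mkc head tail u = q then (if w = u then f e else 0) else 0)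
        = ∑ u : V, (if w = u then (if mkc head tail u = q then f e else 0) else 0) := by
      refine Finset.sum_congr rfl fun u _ => ?_
      by_cases h1 : mkc head tail u = q <;> by_cases h2 : w = u <;> simp [h1, h2]
    rw [h1, Finset.sum_ite_eq Finset.univ w (fun u => if mkc head tail u = q then f e else 0)]
    simp
  have split : (∑ u : V, if mkc head tail u = q then
      ((if head e = u then f e else 0) - (if tail e = u then f e else 0)) else 0)
      = (∑ u : V, if mkc head tail u = q then (if head e = u then f e else 0) else 0)
        - (∑ u : V, if mkc head tail u = q then (if tail e = u then f e else 0) else 0) := by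
    rw [← Finset.sum_sub_distrib]
    refine Finset.sum_congr rfl fun u _ => ?_
    by_cases h : mkc head tail u = q <;> simp [h]
  rw [split, collapse (head e), collapse (tail e)]
  have hht : mkc head tail (head e) = mkc head tail (tail e) :=
    Quotient.sound (Relation.EqvGen.rel _ _ ⟨e, trivial, Or.inl ⟨rfl, rfl⟩⟩)
  rw [hht]
  simp

lemma range_eq_ker (head tail : E → V) :
    AddMonoidHom.range (bdryHomFull (A := A) head tail)
      = AddMonoidHom.ker (sumHom head tail) := by
  apply le_antisymm
  · rintro b ⟨f, rfl⟩
    exact AddMonoidHom.mem_ker.2 (sumHom_bdry head tail f)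
  · rintro b hbk
    have hc : Compatible head tail (fun _ : E => True) b :=
      (compatible_iff_sumHom head tail b).2 (AddMonoidHom.mem_ker.1 hbk)
    have hcp : compatP head tail (Finset.univ : Finset E) b := by
      intro v
      have heq : (∑ u : V, if RP head tail (Finset.univ : Finset E) u v then b u else 0)
          = ∑ u : V, if Reach head tail (fun _ : E => True) u v then b u else 0 :=
        Finset.sum_congr rfl fun u _ => by simp only [reach_eq_rp_univ]
      exact heq.trans (hc v)
    obtain ⟨f, hf⟩ := exists_flow head tail Finset.univ b hcp
    exact ⟨f, funext fun v => congrFun hf v⟩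

lemma sumHom_surjective (head tail : E → V) :
    Function.Surjective (sumHom (A := A) head tail) := by
  intro φ
  refine ⟨fun u => if u = (mkc head tail u).out then φ (mkc head tail u) else 0, ?_⟩
  funext q
  rw [sumHom_apply]
  have step : ∀ u : V, (if mkc head tail u = q then
      (if u = (mkc head tail u).out then φ (mkc head tail u) else 0) else 0)
      = (if u = q.out then φ q else 0) := by
    intro u
    by_cases h1 : mkc head tail u = q
    · rw [h1]
      by_cases h2 : u = q.out <;> simp [h2]
    · have h2 : ¬ u = q.out := by
        rintro rfl
        exact h1 (Quotient.out_eq q)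
      simp [h1, h2]
  rw [Finset.sum_congr rfl fun u _ => step u,
    Finset.sum_ite_eq' Finset.univ q.out (fun _ => φ q)]
  simp
end Aux4

lemma nat_pow_cancel {k a n m : ℕ} (ha : 0 < a) (h : k * a ^ n = a ^ m) : k = a ^ (m - n) := by
  rcases eq_or_lt_of_le (Nat.one_le_iff_ne_zero.2 ha.ne') with h1 | h1
  · have ha1 : a = 1 := h1.symm
    subst ha1
    simpa using h
  · have hdvd : a ^ n ∣ a ^ m := Dvd.intro_left k h
    have hnm : n ≤ m := (Nat.pow_dvd_pow_iff_le_right h1).1 hdvd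
    have : a ^ m = a ^ (m - n) * a ^ n := by
      rw [← pow_add, Nat.sub_add_cancel hnm]
    rw [this] at h
    exact Nat.eq_of_mul_eq_mul_right (pow_pos ha n) h

/-- the number of `(A,b)`-flows is `|A|^{m(G)}` for locally zero-sum `b`. -/
theorem stmt1 {V E A : Type*} [Fintype V] [Fintype E] [AddCommGroup A] [Fintype A]
    (head tail : E → V) (b : V → A)
    (hb : Compatible head tail (fun _ => True) b) :
    Nat.card {f : E → A // bdry head tail f = b} =
      Fintype.card A ^ (Fintype.card E + ncomp head tail (fun _ => True) - Fintype.card V) := by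
  classical
  set D := bdryHomFull (A := A) head tail with hD
  set S := sumHom (A := A) head tail with hS
  have hbk : b ∈ AddMonoidHom.ker S :=
    AddMonoidHom.mem_ker.2 ((compatible_iff_sumHom head tail b).1 hb)
  have hbr : b ∈ AddMonoidHom.range D := by
    rw [range_eq_ker head tail]; exact hbk
  obtain ⟨f0, hf0⟩ := hbr
  have e1 : {f : E → A // bdry head tail f = b} ≃ AddMonoidHom.ker D :=
    { toFun := fun f => ⟨f.1 - f0, by
        have hfb : D f.1 = b := by rw [← bdry_eq]; exact f.2
        rw [AddMonoidHom.mem_ker, map_sub, hfb, hf0, sub_self]⟩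
      invFun := fun g => ⟨g.1 + f0, by
        have hg : D g.1 = 0 := AddMonoidHom.mem_ker.1 g.2
        show bdry head tail (g.1 + f0) = b
        rw [bdry_eq, map_add, hg, hf0, zero_add]⟩
      left_inv := fun f => by ext1; simp
      right_inv := fun g => by ext1; simp }
  rw [Nat.card_congr e1]
  have h1 : Nat.card (AddMonoidHom.ker D) * (AddMonoidHom.ker D).index = Nat.card (E → A) :=
    AddSubgroup.card_mul_index _
  have h2 : (AddMonoidHom.ker D).index = Nat.card (AddMonoidHom.range D) :=
    AddSubgroup.index_ker D
  have h3 : Nat.card (AddMonoidHom.ker S) * (AddMonoidHom.ker S).index = Nat.card (V → A) :=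
    AddSubgroup.card_mul_index _
  have h4 : (AddMonoidHom.ker S).index = Nat.card (AddMonoidHom.range S) :=
    AddSubgroup.index_ker S
  have h5 : AddMonoidHom.range S = ⊤ :=
    AddMonoidHom.range_eq_top.2 (sumHom_surjective head tail)
  have hcQ : ncomp head tail (fun _ : E => True)
      = Nat.card (Quotient (Relation.EqvGen.setoid (edgeRel head tail (fun _ : E => True)))) := rfl
  have hQfin : Finite (Quotient (Relation.EqvGen.setoid (edgeRel head tail (fun _ : E => True)))) :=
    Quotient.finite _
  have h6 : Nat.card (AddMonoidHom.range S)
      = Nat.card A ^ ncomp head tail (fun _ : E => True) := by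
    rw [h5, hcQ]
    rw [Nat.card_congr AddSubgroup.topEquiv.toEquiv, Nat.card_fun]
  have h7 : Nat.card (E → A) = Nat.card A ^ Fintype.card E := by
    simp [Nat.card_fun, Nat.card_eq_fintype_card]
  have h8 : Nat.card (V → A) = Nat.card A ^ Fintype.card V := by
    simp [Nat.card_fun, Nat.card_eq_fintype_card]
  have hrk : Nat.card (AddMonoidHom.range D) = Nat.card (AddMonoidHom.ker S) := by
    rw [range_eq_ker head tail]
  have hApos : 0 < Nat.card A := Nat.card_pos
  -- combine
  have hmain : Nat.card (AddMonoidHom.ker D) * Nat.card A ^ Fintype.card V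
      = Nat.card A ^ (Fintype.card E + ncomp head tail (fun _ : E => True)) := by
    have e2 : Nat.card (AddMonoidHom.ker D) * Nat.card (AddMonoidHom.ker S)
        = Nat.card A ^ Fintype.card E := by
      rw [← h7, ← h1, h2, hrk]
    have e3 : Nat.card (AddMonoidHom.ker S)
          * Nat.card A ^ ncomp head tail (fun _ : E => True)
        = Nat.card A ^ Fintype.card V := by
      rw [← h8, ← h3, h4, h6]
    calc Nat.card (AddMonoidHom.ker D) * Nat.card A ^ Fintype.card V
        = Nat.card (AddMonoidHom.ker D) * (Nat.card (AddMonoidHom.ker S)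
            * Nat.card A ^ ncomp head tail (fun _ : E => True)) := by rw [e3]
      _ = (Nat.card (AddMonoidHom.ker D) * Nat.card (AddMonoidHom.ker S))
            * Nat.card A ^ ncomp head tail (fun _ : E => True) := by ring
      _ = Nat.card A ^ Fintype.card E
            * Nat.card A ^ ncomp head tail (fun _ : E => True) := by rw [e2]
      _ = Nat.card A ^ (Fintype.card E + ncomp head tail (fun _ : E => True)) := by
            rw [pow_add]
  have := nat_pow_cancel hApos hmain
  rw [this, Nat.card_eq_fintype_card]
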